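/- For A ∈ p^{1,0} of su(p,q), i.e., A represented by the block matrix M = [[0, A],[0, 0]] with A a p×q complex matrix, one has trace([M, Mᴴ]²) = 2·trace((AᴴA)²) and trace(MᴴM) = trace(AᴴA); consequently the holomorphic sectional curvature K(M) = −trace([M,Mᴴ]²)/(trace(MᴴM))² satisfies −2 ≤ K(M) ≤ −2/q for all nonzero M, when p ≥ q. -/

import Mathlib

open Matrix

lemma trace_fromBlocks' {m n : Type*} [Fintype m] [Fintype n]
    (X : Matrix m m ℂ) (B : Matrix m n ℂ) (C : Matrix n m ℂ) (Y : Matrix n n ℂ) :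
    (fromBlocks X B C Y).trace = X.trace + Y.trace := by
  simp [Matrix.trace, Fintype.sum_sum_type, fromBlocks]

theorem stmt17 (p q : ℕ) (hq : 1 ≤ q) (hpq : q ≤ p)
    (A : Matrix (Fin p) (Fin q) ℂ) :
    let M : Matrix (Fin p ⊕ Fin q) (Fin p ⊕ Fin q) ℂ := Matrix.fromBlocks 0 A 0 0
    ((M * Mᴴ - Mᴴ * M) * (M * Mᴴ - Mᴴ * M)).trace =
        2 * ((Aᴴ * A) * (Aᴴ * A)).trace ∧
    (Mᴴ * M).trace = (Aᴴ * A).trace ∧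
    (A ≠ 0 →
      -2 ≤ -(((M * Mᴴ - Mᴴ * M) * (M * Mᴴ - Mᴴ * M)).trace.re) /
            ((Mᴴ * M).trace.re) ^ 2 ∧
      -(((M * Mᴴ - Mᴴ * M) * (M * Mᴴ - Mᴴ * M)).trace.re) /
            ((Mᴴ * M).trace.re) ^ 2 ≤ -2 / (q : ℝ)) := by
  intro M
  set B : Matrix (Fin q) (Fin q) ℂ := Aᴴ * A with hBdef
  have hM : Mᴴ = fromBlocks 0 0 Aᴴ 0 := by
    simp [M, fromBlocks_conjTranspose]
  have h1 : M * Mᴴ - Mᴴ * M = fromBlocks (A * Aᴴ) 0 0 (-(Aᴴ * A)) := by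
    simp [M, hM, fromBlocks_multiply, sub_eq_add_neg, fromBlocks_neg, fromBlocks_add]
  have e1 : ((M * Mᴴ - Mᴴ * M) * (M * Mᴴ - Mᴴ * M)).trace = 2 * (B * B).trace := by
    rw [h1, fromBlocks_multiply]
    simp only [Matrix.mul_zero, Matrix.zero_mul, add_zero, zero_add, neg_mul_neg]
    rw [trace_fromBlocks']
    have : (A * Aᴴ * (A * Aᴴ)).trace = (Aᴴ * A * (Aᴴ * A)).trace := by
      rw [show A * Aᴴ * (A * Aᴴ) = A * (Aᴴ * (A * Aᴴ)) by simp [Matrix.mul_assoc],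
        trace_mul_comm,
        show Aᴴ * (A * Aᴴ) * A = Aᴴ * A * (Aᴴ * A) by simp [Matrix.mul_assoc]]
    rw [this]; rw [hBdef]; ring
  have e2 : (Mᴴ * M).trace = B.trace := by
    rw [hM]
    show ((fromBlocks 0 0 Aᴴ 0 : Matrix _ _ ℂ) * fromBlocks 0 A 0 0).trace = _
    rw [fromBlocks_multiply]
    simp [trace_fromBlocks', hBdef]
  refine ⟨e1, e2, ?_⟩
  intro hA
  -- real quantities
  set d : Fin q → ℝ := fun i => ∑ k, Complex.normSq (A k i) with hd
  have hdiag : ∀ i, B i i = ((d i : ℝ) : ℂ) := by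
    intro i
    simp only [hBdef, Matrix.mul_apply, conjTranspose_apply, hd]
    push_cast
    refine Finset.sum_congr rfl fun k _ => ?_
    rw [Complex.normSq_eq_conj_mul_self]
    rfl
  have hBherm : ∀ i j, B j i = starRingEnd ℂ (B i j) := by
    intro i j
    show (Aᴴ * A) j i = starRingEnd ℂ ((Aᴴ * A) i j)
    exact ((isHermitian_conjTranspose_mul_self A).apply j i).symm
  set s : ℝ := B.trace.re with hs
  set t : ℝ := (B * B).trace.re with htd
  have hsd : s = ∑ i, d i := by
    rw [hs, Matrix.trace, Complex.re_sum]
    exact Finset.sum_congr rfl fun i _ => by rw [Matrix.diag_apply, hdiag]; simp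
  have htsum : t = ∑ i, ∑ j, Complex.normSq (B i j) := by
    rw [htd, Matrix.trace, Complex.re_sum]
    refine Finset.sum_congr rfl fun i _ => ?_
    rw [Matrix.diag_apply, Matrix.mul_apply, Complex.re_sum]
    refine Finset.sum_congr rfl fun j _ => ?_
    rw [hBherm i j, Complex.mul_conj]
    simp
  -- Cauchy-Schwarz bound on entries
  set v : Fin q → EuclideanSpace ℂ (Fin p) := fun i => WithLp.toLp 2 (fun k => A k i) with hv
  have hinner : ∀ i j, (inner ℂ (v i) (v j) : ℂ) = B i j := by
    intro i j
    rw [PiLp.inner_apply]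
    simp [hv, hBdef, Matrix.mul_apply, conjTranspose_apply, RCLike.inner_apply, mul_comm]
  have hnormv : ∀ i, ‖v i‖ ^ 2 = d i := by
    intro i
    rw [← inner_self_eq_norm_sq (𝕜 := ℂ), hinner, hdiag]
    simp
  have hdnn : ∀ i, 0 ≤ d i := by
    intro i; rw [← hnormv]; positivity
  have key : ∀ i j, Complex.normSq (B i j) ≤ d i * d j := by
    intro i j
    have h := norm_inner_le_norm (𝕜 := ℂ) (v i) (v j)
    have h2 : ‖(inner ℂ (v i) (v j) : ℂ)‖ ^ 2 ≤ (‖v i‖ * ‖v j‖) ^ 2 :=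
      pow_le_pow_left₀ (norm_nonneg _) h 2
    rw [hinner, mul_pow, hnormv, hnormv] at h2
    rwa [Complex.normSq_eq_norm_sq]
  -- upper bound t ≤ s^2
  have hts : t ≤ s ^ 2 := by
    rw [htsum, hsd, sq, Finset.sum_mul_sum]
    exact Finset.sum_le_sum fun i _ => Finset.sum_le_sum fun j _ => key i j
  -- lower bound s^2 ≤ q * t
  have hst : s ^ 2 ≤ (q : ℝ) * t := by
    have h1 : s ^ 2 ≤ (q : ℝ) * ∑ i, d i ^ 2 := by
      rw [hsd]
      have := sq_sum_le_card_mul_sum_sq (s := (Finset.univ : Finset (Fin q))) (f := d)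
      simpa using this
    have h2 : ∑ i, d i ^ 2 ≤ t := by
      rw [htsum]
      refine Finset.sum_le_sum fun i _ => ?_
      have : Complex.normSq (B i i) = d i ^ 2 := by
        rw [hdiag]; simp [Complex.normSq_ofReal, sq]
      rw [← this]
      exact Finset.single_le_sum (fun j _ => Complex.normSq_nonneg _) (Finset.mem_univ i)
    calc s ^ 2 ≤ (q : ℝ) * ∑ i, d i ^ 2 := h1
      _ ≤ (q : ℝ) * t := by
          exact mul_le_mul_of_nonneg_left h2 (by positivity)
  -- s > 0
  have hspos : 0 < s := by
    obtain ⟨k0, i0, hk⟩ : ∃ k i, A k i ≠ 0 := by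
      contrapose! hA; ext k i; simp [hA]
    rw [hsd]
    refine Finset.sum_pos' (fun i _ => hdnn i) ⟨i0, Finset.mem_univ _, ?_⟩
    rw [hd]
    exact Finset.sum_pos' (fun k _ => Complex.normSq_nonneg _)
      ⟨k0, Finset.mem_univ _, by simpa [Complex.normSq_pos] using hk⟩
  -- conclude
  rw [e1, e2]
  have hre : (2 * (B * B).trace).re = 2 * t := by
    rw [htd]; simp [Complex.mul_re]
  rw [hre]
  have hs2 : (0 : ℝ) < s ^ 2 := by positivity
  have hqpos : (0 : ℝ) < q := by exact_mod_cast hq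
  constructor
  · rw [neg_div, neg_le_neg_iff, div_le_iff₀ hs2]
    nlinarith
  · rw [← hs, div_le_div_iff₀ hs2 hqpos, neg_mul, neg_mul, neg_le_neg_iff]
    nlinarith
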